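/- Let A be a stable symplectic operator on ℂ^{2n} all of whose eigenvalues lie on the unit circle, and suppose every eigenvalue is elliptic (the corresponding maximal invariant subspace is either positive or negative definite for the Hermitian form (1/(2i))ω(x, conj(x))). Then A has a unique positive Lagrangian invariant subspace, namely the direct sum of the eigenspaces that are positive. -/

import Mathlib

open Complex

/-- Model of standard complex symplectic space ℂ^{2n}: pairs (p, q) with p, q ∈ ℂ^n. -/
abbrev SympC (n : ℕ) := (Fin n → ℂ) × (Fin n → ℂ)

/-- The standard symplectic bilinear form on ℂ^{2n}. -/
noncomputable def omegaStd {n : ℕ} (x y : SympC n) : ℂ :=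
  ∑ i, (x.1 i * y.2 i - x.2 i * y.1 i)

/-- Componentwise complex conjugation (the real structure) on ℂ^{2n}. -/
def conjStd {n : ℕ} (x : SympC n) : SympC n :=
  (fun i => star (x.1 i), fun i => star (x.2 i))

/-- The Hermitian-type form h(x) = (1/(2i)) ω(x, conj x) (a real number). -/
noncomputable def hForm {n : ℕ} (x : SympC n) : ℝ :=
  ((1 / (2 * Complex.I)) * omegaStd x (conjStd x)).re

/-- A positive Lagrangian invariant subspace for an operator A. -/
noncomputable def IsPLI {n : ℕ} (A : Module.End ℂ (SympC n))
    (R : Submodule ℂ (SympC n)) : Prop :=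
  Module.finrank ℂ R = n ∧
  (∀ x ∈ R, ∀ y ∈ R, omegaStd x y = 0) ∧
  (∀ x ∈ R, x ≠ 0 →
    (((1 / (2 * Complex.I)) * omegaStd x (conjStd x)).im = 0 ∧ 0 < hForm x)) ∧
  R.map A = R

namespace PLIAux
variable {n : ℕ}

lemma conjStd_eq_star (x : SympC n) : conjStd x = star x := rfl

lemma conjStd_smul (c : ℂ) (x : SympC n) :
    conjStd (c • x) = (starRingEnd ℂ) c • conjStd x := by
  simp only [conjStd_eq_star, star_smul]; rfl

lemma conjStd_add (x y : SympC n) : conjStd (x + y) = conjStd x + conjStd y := by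
  simp only [conjStd_eq_star, star_add]

lemma conjStd_sum {α : Type*} (s : Finset α) (f : α → SympC n) :
    conjStd (∑ i ∈ s, f i) = ∑ i ∈ s, conjStd (f i) := by
  simp only [conjStd_eq_star, star_sum]

lemma conjStd_conjStd (x : SympC n) : conjStd (conjStd x) = x := by
  simp [conjStd_eq_star]

lemma conjStd_eq_zero {x : SympC n} : conjStd x = 0 ↔ x = 0 := by
  simp [conjStd_eq_star]

noncomputable def omegaB (n : ℕ) : SympC n →ₗ[ℂ] SympC n →ₗ[ℂ] ℂ :=
  LinearMap.mk₂ ℂ omegaStd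
    (fun x x' y => by
      simp only [omegaStd, ← Finset.sum_add_distrib]
      exact Finset.sum_congr rfl fun i _ => by
        simp only [Prod.fst_add, Prod.snd_add, Pi.add_apply]; ring)
    (fun c x y => by
      simp only [omegaStd, smul_eq_mul, Finset.mul_sum]
      exact Finset.sum_congr rfl fun i _ => by
        simp only [Prod.smul_fst, Prod.smul_snd, Pi.smul_apply, smul_eq_mul]; ring)
    (fun x y y' => by
      simp only [omegaStd, ← Finset.sum_add_distrib]
      exact Finset.sum_congr rfl fun i _ => by
        simp only [Prod.fst_add, Prod.snd_add, Pi.add_apply]; ring)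
    (fun c x y => by
      simp only [omegaStd, smul_eq_mul, Finset.mul_sum]
      exact Finset.sum_congr rfl fun i _ => by
        simp only [Prod.smul_fst, Prod.smul_snd, Pi.smul_apply, smul_eq_mul]; ring)

lemma omegaB_apply (x y : SympC n) : omegaB n x y = omegaStd x y := rfl

lemma div_two_I_mul (a b : ℂ) :
    (1 / (2 * Complex.I)) * (a * (starRingEnd ℂ) b - b * (starRingEnd ℂ) a)
      = ((a * (starRingEnd ℂ) b).im : ℂ) := by
  have h : b * (starRingEnd ℂ) a = (starRingEnd ℂ) (a * (starRingEnd ℂ) b) := by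
    rw [map_mul, Complex.conj_conj]; ring
  rw [h, Complex.sub_conj]
  have : Complex.I ≠ 0 := Complex.I_ne_zero
  field_simp
  ring_nf
  norm_cast

lemma omega_conj (x : SympC n) :
    (1 / (2 * Complex.I)) * omegaStd x (conjStd x)
      = ((∑ i, (x.1 i * (starRingEnd ℂ) (x.2 i)).im : ℝ) : ℂ) := by
  rw [omegaStd, Finset.mul_sum, Complex.ofReal_sum]
  refine Finset.sum_congr rfl fun i _ => ?_
  have h1 : (conjStd x).2 i = (starRingEnd ℂ) (x.2 i) := rfl
  have h2 : (conjStd x).1 i = (starRingEnd ℂ) (x.1 i) := rfl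
  rw [h1, h2, div_two_I_mul]

lemma hForm_eq (x : SympC n) :
    hForm x = ∑ i, (x.1 i * (starRingEnd ℂ) (x.2 i)).im := by
  rw [hForm, omega_conj, Complex.ofReal_re]

lemma im_omega_conj (x : SympC n) :
    ((1 / (2 * Complex.I)) * omegaStd x (conjStd x)).im = 0 := by
  rw [omega_conj, Complex.ofReal_im]

lemma hForm_zero : hForm (0 : SympC n) = 0 := by
  simp [hForm_eq]

lemma hForm_conj (x : SympC n) : hForm (conjStd x) = - hForm x := by
  rw [hForm_eq, hForm_eq, ← Finset.sum_neg_distrib]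
  refine Finset.sum_congr rfl fun i _ => ?_
  have h1 : (conjStd x).1 i = (starRingEnd ℂ) (x.1 i) := rfl
  have h2 : (conjStd x).2 i = (starRingEnd ℂ) (x.2 i) := rfl
  rw [h1, h2, Complex.conj_conj]
  rw [show (starRingEnd ℂ) (x.1 i) * x.2 i = (starRingEnd ℂ) (x.1 i * (starRingEnd ℂ) (x.2 i)) by
    rw [map_mul, Complex.conj_conj]]
  rw [Complex.conj_im]

lemma hForm_add_of_orth (x y : SympC n)
    (h1 : omegaStd x (conjStd y) = 0) (h2 : omegaStd y (conjStd x) = 0) :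
    hForm (x + y) = hForm x + hForm y := by
  rw [hForm, hForm, hForm, conjStd_add]
  have e : omegaStd (x + y) (conjStd x + conjStd y)
      = omegaStd x (conjStd x) + omegaStd y (conjStd y) := by
    simp only [← omegaB_apply, map_add, LinearMap.add_apply]
    simp only [omegaB_apply, h1, h2]
    ring
  rw [e, mul_add, Complex.add_re]

end PLIAux

open PLIAux

/-- a stable symplectic operator on ℂ^{2n}, all of whose eigenvalues
lie on the unit circle and are elliptic (each maximal invariant subspace is positive
or negative definite for h), has a unique positive Lagrangian invariant subspace,
namely the direct sum of the positive eigenspaces. -/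
theorem unique_PLI_of_elliptic
    {n : ℕ} (A : Module.End ℂ (SympC n))
    (hsymp : ∀ x y, omegaStd (A x) (A y) = omegaStd x y)
    (hreal : ∀ x, A (conjStd x) = conjStd (A x))
    (hdiag : ∃ (b : Module.Basis (Fin (2 * n)) ℂ (SympC n)) (μ : Fin (2 * n) → ℂ),
      ∀ i, A (b i) = μ i • b i)
    (hunit : ∀ σ : ℂ, Module.End.HasEigenvalue A σ → ‖σ‖ = 1)
    (helliptic : ∀ σ : ℂ, Module.End.HasEigenvalue A σ →
      ((∀ x ∈ A.maxGenEigenspace σ, x ≠ 0 → 0 < hForm x) ∨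
       (∀ x ∈ A.maxGenEigenspace σ, x ≠ 0 → hForm x < 0))) :
    IsPLI A (⨆ σ ∈ {σ : ℂ | ∀ x ∈ A.maxGenEigenspace σ, x ≠ 0 → 0 < hForm x},
        A.maxGenEigenspace σ) ∧
    ∀ R : Submodule ℂ (SympC n), IsPLI A R →
      R = ⨆ σ ∈ {σ : ℂ | ∀ x ∈ A.maxGenEigenspace σ, x ≠ 0 → 0 < hForm x},
        A.maxGenEigenspace σ := by
  classical
  obtain ⟨b, μ, hb⟩ := hdiag
  set P : ℂ → Prop := fun σ => ∀ x ∈ A.maxGenEigenspace σ, x ≠ 0 → 0 < hForm x with hPdef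
  have hsetP : {σ : ℂ | ∀ x ∈ A.maxGenEigenspace σ, x ≠ 0 → 0 < hForm x} = {σ : ℂ | P σ} := rfl
  -- basic eigen facts
  have hbe : ∀ i, (b i) ∈ Module.End.eigenspace A (μ i) :=
    fun i => Module.End.mem_eigenspace_iff.mpr (hb i)
  have hbmax : ∀ i, (b i) ∈ A.maxGenEigenspace (μ i) := fun i =>
    (Module.End.mem_maxGenEigenspace _ _ _).mpr ⟨1, by
      simp [pow_one, LinearMap.sub_apply, hb i]⟩
  have hμeig : ∀ i, Module.End.HasEigenvalue A (μ i) := fun i =>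
    Module.End.hasEigenvalue_of_hasEigenvector ⟨hbe i, b.ne_zero i⟩
  have hμunit : ∀ i, ‖μ i‖ = 1 := fun i => hunit _ (hμeig i)
  have hμne : ∀ i, μ i ≠ 0 := fun i => by
    intro h; have h2 := hμunit i; rw [h] at h2; simp at h2
  have hμconj : ∀ i, μ i * (starRingEnd ℂ) (μ i) = 1 := fun i => by
    rw [Complex.mul_conj, ← Complex.sq_norm, hμunit i]; norm_num
  have hbconj : ∀ i, A (conjStd (b i)) = (starRingEnd ℂ) (μ i) • conjStd (b i) := fun i => by
    rw [hreal, hb i, conjStd_smul]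
  have hbconjmax : ∀ i, conjStd (b i) ∈ A.maxGenEigenspace ((starRingEnd ℂ) (μ i)) := fun i =>
    (Module.End.mem_maxGenEigenspace _ _ _).mpr ⟨1, by
      simp [pow_one, LinearMap.sub_apply, hbconj i]⟩
  have hbconjne : ∀ i, conjStd (b i) ≠ 0 := fun i => by
    rw [Ne, conjStd_eq_zero]; exact b.ne_zero i
  -- orthogonality of eigenvectors
  have hK : ∀ i j, μ i ≠ μ j → omegaStd (b i) (conjStd (b j)) = 0 := by
    intro i j hne
    have h0 := hsymp (b i) (conjStd (b j))
    rw [hb i, hbconj j, ← omegaB_apply] at h0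
    simp only [map_smul, LinearMap.smul_apply, smul_eq_mul] at h0
    rw [omegaB_apply] at h0
    by_contra hω
    apply hne
    have h1 : μ i * (starRingEnd ℂ) (μ j) = 1 := by
      have h2 : (μ i * (starRingEnd ℂ) (μ j)) * omegaStd (b i) (conjStd (b j))
          = 1 * omegaStd (b i) (conjStd (b j)) := by rw [one_mul]; linear_combination h0
      exact mul_right_cancel₀ hω h2
    have hc : (starRingEnd ℂ) (μ j) ≠ 0 := by
      simpa using hμne j
    exact mul_right_cancel₀ hc (h1.trans (hμconj j).symm)
  have hω1 : ∀ i j, μ i * μ j ≠ 1 → omegaStd (b i) (b j) = 0 := by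
    intro i j hne
    have h0 := hsymp (b i) (b j)
    rw [hb i, hb j, ← omegaB_apply] at h0
    simp only [map_smul, LinearMap.smul_apply, smul_eq_mul] at h0
    rw [omegaB_apply] at h0
    by_contra hω
    apply hne
    have h2 : (μ i * μ j) * omegaStd (b i) (b j) = 1 * omegaStd (b i) (b j) := by
      rw [one_mul]; linear_combination h0
    exact mul_right_cancel₀ hω h2
  -- powers of (A - σ)
  have hgpow : ∀ (σ : ℂ) (k : ℕ) i,
      ((A - σ • (1 : Module.End ℂ (SympC n)))^k) (b i) = (μ i - σ)^k • b i := by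
    intro σ k i
    induction k with
    | zero => simp
    | succ k ih =>
      rw [pow_succ', Module.End.mul_apply]
      have h1 : (A - σ • (1 : Module.End ℂ (SympC n))) (b i) = (μ i - σ) • b i := by
        simp [LinearMap.sub_apply, hb i, sub_smul]
      rw [ih, map_smul, h1, smul_smul, ← pow_succ]
  -- maxGenEigenspace ≤ span of eigen-basis-vectors
  have hMax : ∀ σ : ℂ, A.maxGenEigenspace σ ≤ Submodule.span ℂ (b '' {i | μ i = σ}) := by
    intro σ x hx
    obtain ⟨k, hk⟩ := (Module.End.mem_maxGenEigenspace A σ x).mp hx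
    rw [Module.Basis.mem_span_image]
    intro i hi
    simp only [Finset.mem_coe, Finsupp.mem_support_iff] at hi
    by_contra hiσ
    simp only [Set.mem_setOf_eq] at hiσ
    apply hi
    have hx0 : ((A - σ • (1 : Module.End ℂ (SympC n)))^k) x
        = ∑ j, ((μ j - σ)^k * b.repr x j) • b j := by
      conv_lhs => rw [← b.sum_repr x]
      rw [map_sum]
      exact Finset.sum_congr rfl fun j _ => by
        rw [map_smul, hgpow σ k j, smul_smul, mul_comm]
    rw [hx0] at hk
    have hz := Fintype.linearIndependent_iff.mp b.linearIndependent _ hk i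
    have hpow : (μ i - σ)^k ≠ 0 := pow_ne_zero _ (sub_ne_zero.mpr hiσ)
    exact (mul_eq_zero.mp hz).resolve_left hpow
  -- sign facts
  have hPpos : ∀ i, P (μ i) → 0 < hForm (b i) := fun i hPi => hPi (b i) (hbmax i) (b.ne_zero i)
  have hPconj : ∀ i, P (μ i) → ¬ P ((starRingEnd ℂ) (μ i)) := by
    intro i hPi hPc
    have h1 := hPc (conjStd (b i)) (hbconjmax i) (hbconjne i)
    rw [hForm_conj] at h1
    linarith [hPpos i hPi]
  have hNP : ∀ i, ¬ P (μ i) → hForm (b i) < 0 := by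
    intro i hPi
    rcases helliptic (μ i) (hμeig i) with h | h
    · exact absurd h hPi
    · exact h (b i) (hbmax i) (b.ne_zero i)
  have hNPconj : ∀ i, ¬ P (μ i) → P ((starRingEnd ℂ) (μ i)) := by
    intro i hPi
    have heig : Module.End.HasEigenvalue A ((starRingEnd ℂ) (μ i)) :=
      Module.End.hasEigenvalue_of_hasEigenvector
        ⟨Module.End.mem_eigenspace_iff.mpr (hbconj i), hbconjne i⟩
    rcases helliptic _ heig with h | h
    · exact h
    · exfalso
      have h2 := h (conjStd (b i)) (hbconjmax i) (hbconjne i)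
      rw [hForm_conj] at h2
      linarith [hNP i hPi]
  -- the span S
  set S : Submodule ℂ (SympC n) := Submodule.span ℂ (b '' {i | P (μ i)}) with hSdef
  have hSR : (⨆ σ ∈ {σ : ℂ | ∀ x ∈ A.maxGenEigenspace σ, x ≠ 0 → 0 < hForm x},
      A.maxGenEigenspace σ) = S := by
    apply le_antisymm
    · rw [hsetP]
      refine iSup₂_le fun σ hσ => (hMax σ).trans (Submodule.span_mono (Set.image_mono ?_))
      intro i hi
      simp only [Set.mem_setOf_eq] at hi ⊢
      rw [hi]; exact hσ
    · rw [hSdef, Submodule.span_le]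
      rintro _ ⟨i, hi, rfl⟩
      rw [hsetP]
      exact le_iSup₂ (f := fun (σ : ℂ) (_ : σ ∈ {σ : ℂ | P σ}) => A.maxGenEigenspace σ)
        (μ i) hi (hbmax i)
  -- dimension
  have finspan : ∀ Q : Fin (2*n) → Prop,
      Module.finrank ℂ (Submodule.span ℂ (b '' {i | Q i})) = Fintype.card {i // Q i} := by
    intro Q
    rw [Set.image_eq_range]
    exact finrank_span_eq_card (b.linearIndependent.comp _ Subtype.val_injective)
  have hconjindep : ∀ Q : Fin (2*n) → Prop,
      LinearIndependent ℂ (fun i : {i // Q i} => conjStd (b i)) := by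
    intro Q
    rw [Fintype.linearIndependent_iff]
    intro g hg i
    have hg' : conjStd (∑ j : {i // Q i}, g j • conjStd (b j)) = conjStd 0 := by rw [hg]
    rw [conjStd_sum] at hg'
    simp only [conjStd_smul, conjStd_conjStd] at hg'
    have hg'' : ∑ j : {i // Q i}, (starRingEnd ℂ) (g j) • b (j : Fin (2*n)) = 0 := by
      rw [hg']; exact conjStd_eq_zero.mpr rfl
    have hz := Fintype.linearIndependent_iff.mp
      (b.linearIndependent.comp _ Subtype.val_injective) _ hg'' i
    simpa using hz
  have hcard : ∀ Q Q' : Fin (2*n) → Prop,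
      (∀ i, Q i → conjStd (b i) ∈ Submodule.span ℂ (b '' {j | Q' j})) →
      Fintype.card {i // Q i} ≤ Fintype.card {i // Q' i} := by
    intro Q Q' hmem
    rw [← finspan Q']
    have hle : Submodule.span ℂ (Set.range (fun i : {i // Q i} => conjStd (b i)))
        ≤ Submodule.span ℂ (b '' {j | Q' j}) := by
      rw [Submodule.span_le]; rintro _ ⟨i, rfl⟩; exact hmem i i.2
    calc Fintype.card {i // Q i}
        = Module.finrank ℂ (Submodule.span ℂ (Set.range fun i : {i // Q i} => conjStd (b i))) :=
          (finrank_span_eq_card (hconjindep Q)).symm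
      _ ≤ _ := Submodule.finrank_mono hle
  have hmem1 : ∀ i, P (μ i) → conjStd (b i) ∈ Submodule.span ℂ (b '' {j | ¬ P (μ j)}) := by
    intro i hi
    refine (hMax ((starRingEnd ℂ) (μ i))).trans
      (Submodule.span_mono (Set.image_mono ?_)) (hbconjmax i)
    intro j hj
    simp only [Set.mem_setOf_eq] at hj ⊢
    rw [hj]; exact hPconj i hi
  have hmem2 : ∀ i, ¬ P (μ i) → conjStd (b i) ∈ Submodule.span ℂ (b '' {j | P (μ j)}) := by
    intro i hi
    refine (hMax ((starRingEnd ℂ) (μ i))).trans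
      (Submodule.span_mono (Set.image_mono ?_)) (hbconjmax i)
    intro j hj
    simp only [Set.mem_setOf_eq] at hj ⊢
    rw [hj]; exact hNPconj i hi
  have hcardeq : Fintype.card {i // P (μ i)} = n := by
    have cardIrrel : ∀ (α : Type) (i1 i2 : Fintype α), @Fintype.card α i1 = @Fintype.card α i2 :=
      fun α i1 i2 => by congr 1; exact Subsingleton.elim _ _
    have h1 : Fintype.card {i // P (μ i)} ≤ Fintype.card {i // ¬ P (μ i)} :=
      le_of_le_of_eq (hcard _ _ hmem1) (cardIrrel _ _ _)
    have h2 : Fintype.card {i // ¬ P (μ i)} ≤ Fintype.card {i // P (μ i)} :=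
      le_of_eq_of_le (cardIrrel _ _ _).symm (hcard _ _ hmem2)
    have h3 : ∀ Q : Fin (2*n) → Prop,
        Fintype.card {i // Q i} + Fintype.card {i // ¬ Q i} = 2*n := by
      intro Q
      rw [Fintype.card_subtype, Fintype.card_subtype,
        Finset.card_filter_add_card_filter_not, Finset.card_univ, Fintype.card_fin]
    have h4 : Fintype.card {i // P (μ i)} + Fintype.card {i // ¬ P (μ i)} = 2*n := h3 _
    omega
  have hfin : Module.finrank ℂ S = n := by rw [hSdef, finspan, hcardeq]
  -- omega vanishes on S
  have homega : ∀ x ∈ S, ∀ y ∈ S, omegaStd x y = 0 := by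
    have hgen : ∀ u ∈ b '' {i | P (μ i)}, ∀ v ∈ b '' {i | P (μ i)}, omegaStd u v = 0 := by
      rintro _ ⟨i, hi, rfl⟩ _ ⟨j, hj, rfl⟩
      apply hω1
      intro h1
      have hμj : μ j = (starRingEnd ℂ) (μ i) :=
        mul_left_cancel₀ (hμne i) (h1.trans (hμconj i).symm)
      exact hPconj i hi (hμj ▸ hj)
    intro x hx y hy
    have step1 : ∀ u ∈ b '' {i | P (μ i)}, omegaStd u y = 0 := by
      intro u hu
      have hker : S ≤ LinearMap.ker (omegaB n u) := by
        rw [hSdef, Submodule.span_le]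
        intro v hv
        exact LinearMap.mem_ker.mpr (hgen u hu v hv)
      exact hker hy
    have hker2 : S ≤ LinearMap.ker ((omegaB n).flip y) := by
      rw [hSdef, Submodule.span_le]
      intro u hu
      rw [SetLike.mem_coe, LinearMap.mem_ker, LinearMap.flip_apply]
      exact step1 u hu
    have := hker2 hx
    rwa [LinearMap.mem_ker, LinearMap.flip_apply, omegaB_apply] at this
  -- positivity on sums of positive eigenvectors
  have hposT : ∀ (T : Finset (Fin (2*n))), (∀ i ∈ T, P (μ i)) → ∀ (c : Fin (2*n) → ℂ),
      0 ≤ hForm (∑ i ∈ T, c i • b i) ∧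
        ((∑ i ∈ T, c i • b i) ≠ 0 → 0 < hForm (∑ i ∈ T, c i • b i)) := by
    intro T
    induction T using Finset.strongInduction with
    | _ T ih =>
      intro hTP c
      rcases T.eq_empty_or_nonempty with rfl | ⟨i₀, hi₀⟩
      · simp [hForm_zero]
      · have hsplit : ∑ i ∈ T, c i • b i
            = (∑ i ∈ T.filter (fun i => μ i = μ i₀), c i • b i)
              + (∑ i ∈ T.filter (fun i => ¬ μ i = μ i₀), c i • b i) :=
          (Finset.sum_filter_add_sum_filter_not T _ _).symm
        set x₁ := ∑ i ∈ T.filter (fun i => μ i = μ i₀), c i • b i with hx₁def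
        set x₂ := ∑ i ∈ T.filter (fun i => ¬ μ i = μ i₀), c i • b i with hx₂def
        have horth : ∀ (Ta Tb : Finset (Fin (2*n))), (∀ i ∈ Ta, ∀ j ∈ Tb, μ i ≠ μ j) →
            omegaStd (∑ i ∈ Ta, c i • b i) (conjStd (∑ j ∈ Tb, c j • b j)) = 0 := by
          intro Ta Tb hab
          rw [conjStd_sum, ← omegaB_apply]
          simp only [conjStd_smul, map_sum, map_smul, LinearMap.sum_apply,
            LinearMap.smul_apply, smul_eq_mul]
          refine Finset.sum_eq_zero fun j hj => ?_
          refine mul_eq_zero_of_right ((starRingEnd ℂ) (c j)) (Finset.sum_eq_zero fun i hi => ?_)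
          rw [omegaB_apply, hK i j (hab i hi j hj), mul_zero]
        have h12 : hForm (x₁ + x₂) = hForm x₁ + hForm x₂ := by
          apply hForm_add_of_orth
          · refine horth _ _ fun i hi j hj => ?_
            rw [(Finset.mem_filter.mp hi).2]
            exact fun h => (Finset.mem_filter.mp hj).2 h.symm
          · refine horth _ _ fun j hj i hi => ?_
            rw [(Finset.mem_filter.mp hi).2]
            exact (Finset.mem_filter.mp hj).2
        have hx₁mem : x₁ ∈ A.maxGenEigenspace (μ i₀) := by
          rw [hx₁def]
          refine Submodule.sum_mem _ fun i hi => ?_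
          have he : μ i = μ i₀ := (Finset.mem_filter.mp hi).2
          exact Submodule.smul_mem _ _ (he ▸ hbmax i)
        have hx₁sign : 0 ≤ hForm x₁ ∧ (x₁ ≠ 0 → 0 < hForm x₁) := by
          by_cases h0 : x₁ = 0
          · rw [h0, hForm_zero]; exact ⟨le_rfl, fun h => absurd rfl h⟩
          · have hp := hTP i₀ hi₀ x₁ hx₁mem h0
            exact ⟨le_of_lt hp, fun _ => hp⟩
        have hT₂sub : T.filter (fun i => ¬ μ i = μ i₀) ⊂ T :=
          Finset.filter_ssubset.mpr ⟨i₀, hi₀, by simp⟩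
        have hx₂sign := ih _ hT₂sub (fun i hi => hTP i (Finset.mem_filter.mp hi).1) c
        rw [hsplit, h12]
        constructor
        · linarith [hx₁sign.1, hx₂sign.1]
        · intro hne
          rcases eq_or_ne x₁ 0 with h1 | h1
          · rcases eq_or_ne x₂ 0 with h2 | h2
            · exact absurd (by rw [h1, h2, add_zero]) hne
            · have := hx₂sign.2 h2; linarith [hx₁sign.1]
          · have := hx₁sign.2 h1; linarith [hx₂sign.1]
  -- positivity on S
  have hpos : ∀ x ∈ S, x ≠ 0 → 0 < hForm x := by
    intro x hx hne
    have hsup : ↑(b.repr x).support ⊆ {i | P (μ i)} := by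
      rw [hSdef] at hx
      exact (Module.Basis.mem_span_image b).mp hx
    have hxrepr : ∑ i ∈ Finset.univ.filter (fun i => P (μ i)), b.repr x i • b i = x := by
      rw [Finset.sum_subset (Finset.subset_univ _)]
      · exact b.sum_repr x
      · intro i _ hiJ
        have hz : b.repr x i = 0 := by
          by_contra h
          apply hiJ
          rw [Finset.mem_filter]
          exact ⟨Finset.mem_univ i, hsup (Finsupp.mem_support_iff.mpr h)⟩
        rw [hz, zero_smul]
    have hp := (hposT (Finset.univ.filter (fun i => P (μ i)))
      (fun i hi => (Finset.mem_filter.mp hi).2) (fun i => b.repr x i)).2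
    rw [hxrepr] at hp
    exact hp hne
  -- invariance
  have hmapS : S.map A = S := by
    rw [hSdef, Submodule.map_span]
    apply le_antisymm
    · rw [Submodule.span_le]
      rintro _ ⟨_, ⟨i, hi, rfl⟩, rfl⟩
      rw [hb i]
      exact Submodule.smul_mem _ _ (Submodule.subset_span ⟨i, hi, rfl⟩)
    · rw [Submodule.span_le]
      rintro _ ⟨i, hi, rfl⟩
      have hbi : b i = (μ i)⁻¹ • A (b i) := by
        rw [hb i, smul_smul, inv_mul_cancel₀ (hμne i), one_smul]
      rw [SetLike.mem_coe, hbi]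
      exact Submodule.smul_mem _ _ (Submodule.subset_span ⟨b i, ⟨i, hi, rfl⟩, rfl⟩)
  constructor
  · rw [hSR]
    exact ⟨hfin, homega, fun x hx hxne => ⟨im_omega_conj x, hpos x hx hxne⟩, hmapS⟩
  · intro R hR
    obtain ⟨hRn, hRω, hRpos, hRmap⟩ := hR
    have hinv : ∀ x ∈ R, A x ∈ R := by
      intro x hx
      rw [← hRmap]
      exact Submodule.mem_map_of_mem hx
    have hRle : R ≤ S := by
      intro x hx
      have htop : ⨆ σ, Module.End.maxGenEigenspace (A.restrict hinv) σ = ⊤ :=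
        Module.End.iSup_maxGenEigenspace_eq_top _
      have hxmem : (⟨x, hx⟩ : R) ∈ (⊤ : Submodule ℂ R) := trivial
      rw [← htop] at hxmem
      have hxmem2 : x ∈ Submodule.map R.subtype
          (⨆ σ, Module.End.maxGenEigenspace (A.restrict hinv) σ) := ⟨_, hxmem, rfl⟩
      rw [Submodule.map_iSup] at hxmem2
      have hle : (⨆ σ, Submodule.map R.subtype
          (Module.End.maxGenEigenspace (A.restrict hinv) σ)) ≤ S := by
        refine iSup_le fun σ => ?_
        have he : Module.End.maxGenEigenspace (A.restrict hinv) σ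
            = Submodule.comap R.subtype (A.maxGenEigenspace σ) :=
          Module.End.genEigenspace_restrict A R ⊤ σ hinv
        rw [he, Submodule.map_comap_eq, Submodule.range_subtype]
        intro y hy
        rw [Submodule.mem_inf] at hy
        obtain ⟨hyR, hyM⟩ := hy
        by_cases hy0 : y = 0
        · exact hy0 ▸ Submodule.zero_mem _
        · have hy' := hMax σ hyM
          have hex : ∃ i, μ i = σ := by
            by_contra hno
            push_neg at hno
            have hemp : (⇑b '' {i | μ i = σ}) = ∅ := by
              rw [Set.eq_empty_iff_forall_notMem]
              rintro _ ⟨i, hi, rfl⟩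
              exact hno i hi
            rw [hemp, Submodule.span_empty, Submodule.mem_bot] at hy'
            exact hy0 hy'
          obtain ⟨i, rfl⟩ := hex
          rcases helliptic (μ i) (hμeig i) with hPσ | hNσ
          · exact (hMax (μ i)).trans (Submodule.span_mono (Set.image_mono (by
              intro j hj
              simp only [Set.mem_setOf_eq] at hj ⊢
              rw [hj]; exact hPσ))) hyM
          · exact absurd (hRpos y hyR hy0).2 (not_lt.mpr (le_of_lt (hNσ y hyM hy0)))
      exact hle hxmem2
    rw [hSR]
    exact Submodule.eq_of_le_of_finrank_le hRle (by rw [hfin, hRn])
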